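/- For the standard (n-1)-simplex in R^n with vertices e_1,...,e_n, the point minimizing (sum over i of d(q, e_i)^ρ)^{1/ρ} over all q in R^n is the barycenter o = (1/n,...,1/n), and the minimal value equals n^{1/ρ} · sqrt((n-1)/n). -/

import Mathlib

open Finset in
theorem simplex_optimal_center (n : ℕ) (hn : 1 ≤ n) (ρ : ℝ) (hρ : 1 ≤ ρ)
    (o : EuclideanSpace ℝ (Fin n)) (ho : o = (WithLp.equiv 2 (Fin n → ℝ)).symm (fun _ => 1/n)) :
    (∀ q : EuclideanSpace ℝ (Fin n),
      (∑ i, dist o (EuclideanSpace.single i (1:ℝ)) ^ ρ) ^ (1/ρ)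
        ≤ (∑ i, dist q (EuclideanSpace.single i (1:ℝ)) ^ ρ) ^ (1/ρ)) ∧
    (∑ i, dist o (EuclideanSpace.single i (1:ℝ)) ^ ρ) ^ (1/ρ)
      = (n : ℝ) ^ (1/ρ) * Real.sqrt (((n : ℝ) - 1) / n) := by
  have hn0 : (0:ℝ) < n := by exact_mod_cast hn
  have hn1 : (1:ℝ) ≤ n := by exact_mod_cast hn
  have hρ0 : (0:ℝ) < ρ := lt_of_lt_of_le one_pos hρ
  set c : ℝ := Real.sqrt (((n:ℝ) - 1) / n) with hc
  have hc0 : 0 ≤ c := Real.sqrt_nonneg _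
  have hcsq : c ^ 2 = ((n:ℝ) - 1) / n := by
    rw [hc, Real.sq_sqrt (div_nonneg (by linarith) hn0.le)]
  -- the key scalar sum
  have hsum : ∀ i : Fin n,
      ∑ j : Fin n, ((1/(n:ℝ)) - (if j = i then 1 else 0))^2 = ((n:ℝ) - 1)/n := by
    intro i
    have h1 : ∀ j : Fin n, ((1/(n:ℝ)) - (if j = i then 1 else 0))^2
        = (1/(n:ℝ))^2 + (if j = i then ((1/(n:ℝ)) - 1)^2 - (1/(n:ℝ))^2 else 0) := by
      intro j; split_ifs <;> ring
    simp_rw [h1]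
    rw [Finset.sum_add_distrib, Finset.sum_const, Finset.sum_ite_eq' Finset.univ i]
    simp only [Finset.mem_univ, if_true, Finset.card_univ, Fintype.card_fin, nsmul_eq_mul]
    field_simp
    ring
  -- distance from o to each vertex
  have hdist : ∀ i : Fin n, dist o (EuclideanSpace.single i (1:ℝ)) = c := by
    intro i
    rw [EuclideanSpace.dist_eq]
    have h2 : ∑ j, dist (o j) (EuclideanSpace.single i (1:ℝ) j) ^ 2 = ((n:ℝ) - 1)/n := by
      rw [← hsum i]
      refine Finset.sum_congr rfl fun j _ => ?_
      rw [ho]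
      simp only [WithLp.equiv_symm_apply, WithLp.ofLp_toLp, EuclideanSpace.single_apply, Real.dist_eq]
      rw [sq_abs]
    rw [h2, hc]
  have hnorm : ∀ i : Fin n, ‖EuclideanSpace.single i (1:ℝ) - o‖ = c := by
    intro i
    rw [← norm_sub_rev, ← dist_eq_norm, hdist i]
  -- sum of (e i - o) is 0
  have hsumvec : ∑ i, (EuclideanSpace.single i (1:ℝ) - o) = 0 := by
    refine PiLp.ext fun j => ?_
    rw [ho]
    simp [Finset.sum_apply, EuclideanSpace.single_apply, Finset.sum_sub_distrib,
      Finset.sum_ite_eq, WithLp.equiv_symm_apply, Finset.card_univ]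
    rw [mul_inv_cancel₀ (ne_of_gt hn0)]
    simp [EuclideanSpace.single_apply, Finset.sum_ite_eq]
  -- key inner product bound
  have hkey : ∀ q : EuclideanSpace ℝ (Fin n),
      (n:ℝ) * c ^ 2 ≤ (∑ i, dist q (EuclideanSpace.single i (1:ℝ))) * c := by
    intro q
    have hs : ∑ i, (inner ℝ (EuclideanSpace.single i (1:ℝ) - q)
        (EuclideanSpace.single i (1:ℝ) - o) : ℝ) = (n:ℝ) * c ^ 2 := by
      have hrw : ∀ i : Fin n, (EuclideanSpace.single i (1:ℝ) - q)
          = (EuclideanSpace.single i (1:ℝ) - o) + (o - q) := by intro i; abel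
      calc ∑ i, (inner ℝ (EuclideanSpace.single i (1:ℝ) - q) (EuclideanSpace.single i (1:ℝ) - o) : ℝ)
          = ∑ i, ((inner ℝ (EuclideanSpace.single i (1:ℝ) - o) (EuclideanSpace.single i (1:ℝ) - o) : ℝ)
              + (inner ℝ (o - q) (EuclideanSpace.single i (1:ℝ) - o) : ℝ)) := by
            refine Finset.sum_congr rfl fun i _ => ?_
            rw [hrw i, inner_add_left]
        _ = (∑ i, ‖EuclideanSpace.single i (1:ℝ) - o‖ ^ 2)
              + (inner ℝ (o - q) (∑ i, (EuclideanSpace.single i (1:ℝ) - o)) : ℝ) := by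
            rw [Finset.sum_add_distrib, inner_sum]
            congr 1
            exact Finset.sum_congr rfl fun i _ => real_inner_self_eq_norm_sq _
        _ = (n:ℝ) * c ^ 2 := by
            rw [hsumvec, inner_zero_right, add_zero]
            simp [hnorm, Finset.card_univ]
    calc (n:ℝ) * c ^ 2 = ∑ i, (inner ℝ (EuclideanSpace.single i (1:ℝ) - q)
          (EuclideanSpace.single i (1:ℝ) - o) : ℝ) := hs.symm
      _ ≤ ∑ i, dist q (EuclideanSpace.single i (1:ℝ)) * c := by
          refine Finset.sum_le_sum fun i _ => ?_
          calc (inner ℝ (EuclideanSpace.single i (1:ℝ) - q) (EuclideanSpace.single i (1:ℝ) - o) : ℝ)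
              ≤ ‖EuclideanSpace.single i (1:ℝ) - q‖ * ‖EuclideanSpace.single i (1:ℝ) - o‖ :=
                real_inner_le_norm _ _
            _ = dist q (EuclideanSpace.single i (1:ℝ)) * c := by
                rw [hnorm i, ← dist_eq_norm, dist_comm]
      _ = (∑ i, dist q (EuclideanSpace.single i (1:ℝ))) * c := by
          rw [Finset.sum_mul]
  -- main rpow bound
  have hmain : ∀ q : EuclideanSpace ℝ (Fin n),
      (n:ℝ) * c ^ ρ ≤ ∑ i, dist q (EuclideanSpace.single i (1:ℝ)) ^ ρ := by
    intro q
    rcases eq_or_lt_of_le hc0 with h0 | hcpos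
    · rw [← h0, Real.zero_rpow (ne_of_gt hρ0), mul_zero]
      exact Finset.sum_nonneg fun i _ => Real.rpow_nonneg dist_nonneg _
    · have hD : (n:ℝ) * c ≤ ∑ i, dist q (EuclideanSpace.single i (1:ℝ)) := by
        have := hkey q
        nlinarith
      have hw : ∑ _i : Fin n, (1/(n:ℝ)) = 1 := by
        simp [Finset.card_univ]
        field_simp
      have hpm := Real.rpow_arith_mean_le_arith_mean_rpow Finset.univ
        (fun _ => 1/(n:ℝ)) (fun i => dist q (EuclideanSpace.single i (1:ℝ)))
        (fun i _ => by positivity) hw (fun i _ => dist_nonneg) hρ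
      have h1 : c ^ ρ ≤ (∑ i, (1/(n:ℝ)) * dist q (EuclideanSpace.single i (1:ℝ))) ^ ρ := by
        refine Real.rpow_le_rpow hc0 ?_ hρ0.le
        rw [← Finset.mul_sum, div_mul_eq_mul_div, one_mul, le_div_iff₀ hn0]
        linarith [hD]
      have h2 : c ^ ρ ≤ (1/(n:ℝ)) * ∑ i, dist q (EuclideanSpace.single i (1:ℝ)) ^ ρ := by
        rw [Finset.mul_sum]
        exact le_trans h1 hpm
      calc (n:ℝ) * c ^ ρ ≤ (n:ℝ) * ((1/(n:ℝ)) * ∑ i, dist q (EuclideanSpace.single i (1:ℝ)) ^ ρ) :=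
            by exact mul_le_mul_of_nonneg_left h2 hn0.le
        _ = ∑ i, dist q (EuclideanSpace.single i (1:ℝ)) ^ ρ := by field_simp
  have hLHS : ∑ i, dist o (EuclideanSpace.single i (1:ℝ)) ^ ρ = (n:ℝ) * c ^ ρ := by
    simp [hdist, Finset.card_univ]
  constructor
  · intro q
    rw [hLHS]
    exact Real.rpow_le_rpow (by positivity) (hmain q) (by positivity)
  · rw [hLHS, Real.mul_rpow hn0.le (Real.rpow_nonneg hc0 _),
      ← Real.rpow_mul hc0, mul_one_div_cancel (ne_of_gt hρ0), Real.rpow_one]
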